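/- arXiv:1212.6107 — 2 statements merged into one kernel-verified Lean document; each statement's English description precedes it below -/
import Mathlib

section
/- If nonzero vectors a_1, ..., a_n in R_{max,+}^m form a minimal generating system for a vector b (that is, b is a max-plus linear combination of a_1,...,a_n but is not a max-plus linear combination of any proper subsystem), then the representation of b as a max-plus linear combination b = x_1 ⊗ a_1 ⊕ ... ⊕ x_n ⊗ a_n is unique: if b = ⊕_i x_i ⊗ a_i = ⊕_i x'_i ⊗ a_i then x_i = x'_i for all i. -/
lemma stmt_2_drop {m n : ℕ} (a : Fin n → Fin m → WithBot ℝ) (b : Fin m → WithBot ℝ)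
    (x x' : Fin n → WithBot ℝ)
    (hx : ∀ i, b i = Finset.univ.sup fun j => x j + a j i)
    (hx' : ∀ i, b i = Finset.univ.sup fun j => x' j + a j i)
    (k : Fin n) (hlt : x k < x' k) :
    ∀ i, b i = (Finset.univ.erase k).sup fun j => x j + a j i := by
  intro i
  have hsplit : b i = (x k + a k i) ⊔ ((Finset.univ.erase k).sup fun j => x j + a j i) := by
    rw [hx i]
    conv_lhs => rw [← Finset.insert_erase (Finset.mem_univ k)]
    rw [Finset.sup_insert]
  by_cases hak : a k i = ⊥
  · simpa [hak] using hsplit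
  · have hle : x' k + a k i ≤ b i := by
      rw [hx' i]; exact Finset.le_sup (f := fun j => x' j + a j i) (Finset.mem_univ k)
    have hstrict : x k + a k i < b i :=
      lt_of_lt_of_le (WithBot.add_lt_add_right hak hlt) hle
    rcases le_total (x k + a k i) ((Finset.univ.erase k).sup fun j => x j + a j i) with h | h
    · rw [hsplit, sup_eq_right.mpr h]
    · exact absurd hstrict (by rw [hsplit, sup_eq_left.mpr h]; exact lt_irrefl _)

/-- If nonzero vectors a_1,...,a_n in R_{max,+}^m form a minimal generating system
for b (b is a max-plus linear combination of the whole system but of no proper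
subsystem), then the representation of b as a max-plus linear combination is unique. -/
theorem stmt_2 (m n : ℕ) (a : Fin n → Fin m → WithBot ℝ) (b : Fin m → WithBot ℝ)
    (ha : ∀ j, a j ≠ fun _ => (⊥ : WithBot ℝ))
    (hgen : ∃ x : Fin n → WithBot ℝ, ∀ i, b i = Finset.univ.sup fun j => x j + a j i)
    (hmin : ∀ s : Finset (Fin n), s ≠ Finset.univ →
      ¬ ∃ x : Fin n → WithBot ℝ, ∀ i, b i = s.sup fun j => x j + a j i) :
    ∀ x x' : Fin n → WithBot ℝ,
      (∀ i, b i = Finset.univ.sup fun j => x j + a j i) →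
      (∀ i, b i = Finset.univ.sup fun j => x' j + a j i) →
      x = x' := by
  intro x x' hx hx'
  funext k
  by_contra hk
  have hne : Finset.univ.erase k ≠ (Finset.univ : Finset (Fin n)) := (Finset.erase_ssubset (Finset.mem_univ k)).ne
  rcases lt_or_gt_of_ne hk with hlt | hlt
  · exact hmin _ hne ⟨x, stmt_2_drop a b x x' hx hx' k hlt⟩
  · exact hmin _ hne ⟨x', stmt_2_drop a b x' x hx' hx k hlt⟩
end

section
/- Let A be an m×n real matrix, d ∈ R^m, and suppose the columns a_1,...,a_n of A form a minimal generating system for d in the max-plus sense. Then the equation max_j(a_{ij} + x_j) = d_i (for all i) has the unique solution x_j = min_k(d_k - a_{kj}). -/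
/-- If the columns of A form a minimal generating system for d (d is a max-plus
linear combination of all columns but of no proper subsystem), then the equation
max_j(a_{ij} + x_j) = d_i has the unique solution x_j = min_k(d_k - a_{kj}). -/
theorem stmt_16 (m n : ℕ) (hm : 0 < m) (hn : 0 < n)
    (A : Fin m → Fin n → ℝ) (d : Fin m → ℝ)
    (hgen : ∃ x : Fin n → ℝ, ∀ i, d i = ⨆ j, (x j + A i j))
    (hmin : ∀ (s : Finset (Fin n)) (hs : s.Nonempty), s ≠ Finset.univ →
      ¬ ∃ x : Fin n → ℝ, ∀ i, d i = s.sup' hs fun j => x j + A i j) :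
    (∀ i, (⨆ j, (A i j + ⨅ k, (d k - A k j))) = d i) ∧
    ∀ x : Fin n → ℝ, (∀ i, (⨆ j, (A i j + x j)) = d i) →
      ∀ j, x j = ⨅ k, (d k - A k j) := by
  haveI : Nonempty (Fin n) := ⟨⟨0, hn⟩⟩
  haveI : Nonempty (Fin m) := ⟨⟨0, hm⟩⟩
  set xbar : Fin n → ℝ := fun j => ⨅ k, (d k - A k j) with hxbar
  have hbddA : ∀ f : Fin n → ℝ, BddAbove (Set.range f) :=
    fun f => (Set.finite_range f).bddAbove
  have hbddB : ∀ f : Fin m → ℝ, BddBelow (Set.range f) :=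
    fun f => (Set.finite_range f).bddBelow
  -- Step A : A i j + xbar j ≤ d i
  have stepA : ∀ i j, A i j + xbar j ≤ d i := by
    intro i j
    have h : xbar j ≤ d i - A i j := ciInf_le (hbddB _) i
    linarith
  -- Step B : any solution is ≤ xbar
  have stepB : ∀ (x : Fin n → ℝ), (∀ i, (⨆ j, (A i j + x j)) = d i) →
      ∀ j, x j ≤ xbar j := by
    intro x hx j
    apply le_ciInf
    intro k
    have h : A k j + x j ≤ ⨆ j, (A k j + x j) := le_ciSup (f := fun j => A k j + x j) (hbddA _) j
    rw [hx k] at h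
    linarith
  obtain ⟨x0, hx0⟩ := hgen
  have hx0' : ∀ i, (⨆ j, (A i j + x0 j)) = d i := by
    intro i
    rw [hx0 i]
    congr 1; funext j; ring
  have part1 : ∀ i, (⨆ j, (A i j + xbar j)) = d i := by
    intro i
    apply le_antisymm
    · exact ciSup_le (fun j => stepA i j)
    · rw [← hx0' i]
      exact ciSup_mono (hbddA _) (fun j => by
        have := stepB x0 hx0' j; linarith)
  refine ⟨part1, ?_⟩
  intro x hx j0
  by_contra hne
  have hlt : x j0 < xbar j0 := lt_of_le_of_ne (stepB x hx j0) hne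
  -- for each i, the sup is attained at some j ≠ j0
  have hwit : ∀ i, ∃ j, j ≠ j0 ∧ A i j + x j = d i := by
    intro i
    obtain ⟨j, hj⟩ := Finite.exists_max (fun j => A i j + x j)
    have heq : A i j + x j = d i := by
      rw [← hx i]
      exact le_antisymm (le_ciSup (f := fun j => A i j + x j) (hbddA _) j) (ciSup_le hj)
    have hjne : j ≠ j0 := by
      intro h
      subst h
      have h1 : A i j + x j < A i j + xbar j := by linarith
      have h2 := stepA i j
      linarith
    exact ⟨j, hjne, heq⟩
  set s : Finset (Fin n) := Finset.univ.erase j0 with hs_def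
  obtain ⟨j1, hj1ne, hj1eq⟩ := hwit ⟨0, hm⟩
  have hs : s.Nonempty := ⟨j1, Finset.mem_erase.mpr ⟨hj1ne, Finset.mem_univ _⟩⟩
  have hsne : s ≠ Finset.univ := by
    intro h
    have : j0 ∈ s := h ▸ Finset.mem_univ j0
    exact (Finset.mem_erase.mp this).1 rfl
  apply hmin s hs hsne
  refine ⟨x, fun i => ?_⟩
  apply le_antisymm
  · obtain ⟨j, hjne, hjeq⟩ := hwit i
    have hmem : j ∈ s := Finset.mem_erase.mpr ⟨hjne, Finset.mem_univ _⟩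
    calc d i = x j + A i j := by linarith
    _ ≤ s.sup' hs fun j => x j + A i j := Finset.le_sup' (fun j => x j + A i j) hmem
  · apply Finset.sup'_le
    intro j _
    have h : A i j + x j ≤ ⨆ j, (A i j + x j) := le_ciSup (f := fun j => A i j + x j) (hbddA _) j
    rw [hx i] at h
    linarith
end
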